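/- Let ρ and σ be commuting d×d positive semidefinite matrices of trace 1 such that ρ ≤ λ₀σ (in the Loewner order) for some real λ₀ > 1. Then the fidelity satisfies F(ρ,σ) = tr√(√ρ σ √ρ) ≥ 1 − (1/2)·(√λ₀/(√λ₀+1))·‖ρ−σ‖₁. -/

import Mathlib

namespace Matrix.PosSemidef

open scoped ComplexOrder

variable {n 𝕜 : Type*} [Fintype n] [DecidableEq n] [RCLike 𝕜]

/-- The positive semidefinite square root of a positive semidefinite matrix -/
noncomputable def sqrt {A : Matrix n n 𝕜} (hA : A.PosSemidef) : Matrix n n 𝕜 :=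
  hA.1.eigenvectorUnitary.1 * Matrix.diagonal ((↑) ∘ (√·) ∘ hA.1.eigenvalues) *
  (star hA.1.eigenvectorUnitary : Matrix n n 𝕜)

lemma posSemidef_sqrt {A : Matrix n n 𝕜} (hA : A.PosSemidef) : PosSemidef hA.sqrt := by
  have hd : (Matrix.diagonal ((↑) ∘ (√·) ∘ hA.1.eigenvalues : n → 𝕜)).PosSemidef := by
    refine Matrix.posSemidef_diagonal_iff.mpr fun i => ?_
    rw [Function.comp_apply, RCLike.nonneg_iff]
    constructor
    · simp only [Function.comp_apply, RCLike.ofReal_re]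
      exact Real.sqrt_nonneg _
    · simp only [Function.comp_apply, RCLike.ofReal_im]
  have h := hd.mul_mul_conjTranspose_same (hA.1.eigenvectorUnitary.1 : Matrix n n 𝕜)
  simpa [sqrt, Matrix.star_eq_conjTranspose] using h

end Matrix.PosSemidef

set_option maxHeartbeats 1000000

open Matrix Module.End

lemma simul_diag {d : ℕ} (ρ σ : Matrix (Fin d) (Fin d) ℂ)
    (hρ : ρ.IsHermitian) (hσ : σ.IsHermitian) (hcomm : ρ * σ = σ * ρ) :
    ∃ (U : Matrix (Fin d) (Fin d) ℂ) (p q : Fin d → ℝ),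
      Uᴴ * U = 1 ∧ U * Uᴴ = 1 ∧
      ρ = U * diagonal (fun i => (p i : ℂ)) * Uᴴ ∧
      σ = U * diagonal (fun i => (q i : ℂ)) * Uᴴ := by
  classical
  let A : EuclideanSpace ℂ (Fin d) →ₗ[ℂ] EuclideanSpace ℂ (Fin d) := Matrix.toEuclideanLin ρ
  let B : EuclideanSpace ℂ (Fin d) →ₗ[ℂ] EuclideanSpace ℂ (Fin d) := Matrix.toEuclideanLin σ
  have hA : A.IsSymmetric := Matrix.isHermitian_iff_isSymmetric.mp hρ
  have hB : B.IsSymmetric := Matrix.isHermitian_iff_isSymmetric.mp hσ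
  have hAB : Commute A B := by
    have h1 : A * B = Matrix.toEuclideanLin (ρ * σ) := by
      ext x i
      simp [A, B, Matrix.toEuclideanLin_apply, Matrix.mulVec_mulVec]
    have h2 : B * A = Matrix.toEuclideanLin (σ * ρ) := by
      ext x i
      simp [A, B, Matrix.toEuclideanLin_apply, Matrix.mulVec_mulVec]
    unfold Commute SemiconjBy
    rw [h1, h2, hcomm]
  have hI : DirectSum.IsInternal
      (fun i : ℂ × ℂ => eigenspace A i.2 ⊓ eigenspace B i.1) :=
    hA.directSum_isInternal_of_commute hB hAB
  rw [DirectSum.isInternal_submodule_iff_iSupIndep_and_iSup_eq_top] at hI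
  obtain ⟨hind, hsup⟩ := hI
  haveI : Fintype {i : ℂ × ℂ // (eigenspace A i.2 ⊓ eigenspace B i.1) ≠ ⊥} :=
    hind.fintypeNeBotOfFiniteDimensional
  have hindW : iSupIndep (fun j : {i : ℂ × ℂ // (eigenspace A i.2 ⊓ eigenspace B i.1) ≠ ⊥} =>
      eigenspace A (j : ℂ × ℂ).2 ⊓ eigenspace B (j : ℂ × ℂ).1) :=
    hind.comp Subtype.coe_injective
  have hsupW : (⨆ j : {i : ℂ × ℂ // (eigenspace A i.2 ⊓ eigenspace B i.1) ≠ ⊥},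
      (eigenspace A (j : ℂ × ℂ).2 ⊓ eigenspace B (j : ℂ × ℂ).1)) = ⊤ := by
    apply le_antisymm le_top
    rw [← hsup]
    apply iSup_le
    intro i
    by_cases h : (eigenspace A i.2 ⊓ eigenspace B i.1) = ⊥
    · rw [h]; exact bot_le
    · exact le_iSup (fun j : {i : ℂ × ℂ // (eigenspace A i.2 ⊓ eigenspace B i.1) ≠ ⊥} =>
        (eigenspace A (j : ℂ × ℂ).2 ⊓ eigenspace B (j : ℂ × ℂ).1)) ⟨i, h⟩
  have hIW : DirectSum.IsInternal
      (fun j : {i : ℂ × ℂ // (eigenspace A i.2 ⊓ eigenspace B i.1) ≠ ⊥} =>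
        eigenspace A (j : ℂ × ℂ).2 ⊓ eigenspace B (j : ℂ × ℂ).1) :=
    (DirectSum.isInternal_submodule_iff_iSupIndep_and_iSup_eq_top _).mpr ⟨hindW, hsupW⟩
  have hfam := (hA.orthogonalFamily_eigenspace_inf_eigenspace hB).comp
    (Subtype.coe_injective :
      Function.Injective (fun j : {i : ℂ × ℂ // (eigenspace A i.2 ⊓ eigenspace B i.1) ≠ ⊥} =>
        (j : ℂ × ℂ)))
  have hn : Module.finrank ℂ (EuclideanSpace ℂ (Fin d)) = d := finrank_euclideanSpace_fin
  let b := hIW.subordinateOrthonormalBasis hn hfam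
  have hbmem := fun a : Fin d => hIW.subordinateOrthonormalBasis_subordinate hn a hfam
  set c := fun a : Fin d =>
    ((hIW.subordinateOrthonormalBasisIndex hn a hfam : {i : ℂ × ℂ // _}) : ℂ × ℂ) with hc
  have hAe : ∀ a : Fin d, A (b a) = (c a).2 • b a :=
    fun a => mem_eigenspace_iff.mp (hbmem a).1
  have hBe : ∀ a : Fin d, B (b a) = (c a).1 • b a :=
    fun a => mem_eigenspace_iff.mp (hbmem a).2
  have hbne : ∀ a, b a ≠ 0 := fun a => b.toBasis.ne_zero a
  have hreal2 : ∀ a, ((c a).2.re : ℂ) = (c a).2 := by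
    intro a
    have h1 : HasEigenvalue A (c a).2 :=
      hasEigenvalue_of_hasEigenvector ⟨mem_eigenspace_iff.mpr (hAe a), hbne a⟩
    exact Complex.conj_eq_iff_re.mp (hA.conj_eigenvalue_eq_self h1)
  have hreal1 : ∀ a, ((c a).1.re : ℂ) = (c a).1 := by
    intro a
    have h1 : HasEigenvalue B (c a).1 :=
      hasEigenvalue_of_hasEigenvector ⟨mem_eigenspace_iff.mpr (hBe a), hbne a⟩
    exact Complex.conj_eq_iff_re.mp (hB.conj_eigenvalue_eq_self h1)
  set U : Matrix (Fin d) (Fin d) ℂ := Matrix.of (fun i a => b a i) with hUdef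
  have hU1 : Uᴴ * U = 1 := by
    ext a e
    simp only [Matrix.mul_apply, Matrix.conjTranspose_apply, Matrix.one_apply, hUdef,
      Matrix.of_apply]
    have h := orthonormal_iff_ite.mp b.orthonormal a e
    rw [PiLp.inner_apply] at h
    simpa [RCLike.inner_apply, RCLike.star_def, mul_comm] using h
  have hU2 : U * Uᴴ = 1 := mul_eq_one_comm.mp hU1
  have key : ∀ (M : Matrix (Fin d) (Fin d) ℂ) (v : Fin d → ℂ),
      (∀ a, Matrix.toEuclideanLin M (b a) = v a • b a) → M = U * diagonal v * Uᴴ := by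
    intro M v h
    have h1 : M * U = U * diagonal v := by
      ext i a
      have h3 : (Matrix.toEuclideanLin M (b a)) i = (v a • b a) i := by rw [h a]
      simp only [Matrix.toEuclideanLin_apply,
        PiLp.smul_apply, smul_eq_mul, Matrix.mulVec,
        dotProduct] at h3
      simp only [Matrix.mul_apply, hUdef, Matrix.of_apply, Matrix.diagonal_apply, mul_ite,
        mul_zero, Finset.sum_ite_eq, Finset.sum_ite_eq', Finset.mem_univ, if_true]
      rw [h3, mul_comm]
    calc M = M * (U * Uᴴ) := by rw [hU2, Matrix.mul_one]
    _ = (M * U) * Uᴴ := by rw [Matrix.mul_assoc]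
    _ = U * diagonal v * Uᴴ := by rw [h1]
  refine ⟨U, fun a => (c a).2.re, fun a => (c a).1.re, hU1, hU2, ?_, ?_⟩
  · apply key
    intro a
    rw [show ((((c a).2.re : ℝ) : ℂ)) = (c a).2 from hreal2 a]
    exact hAe a
  · apply key
    intro a
    rw [show ((((c a).1.re : ℝ) : ℂ)) = (c a).1 from hreal1 a]
    exact hBe a

open Matrix
open scoped ComplexOrder

lemma conj_psd {d : ℕ} {U : Matrix (Fin d) (Fin d) ℂ}
    (f : Fin d → ℝ) (hf : ∀ i, 0 ≤ f i) :
    (U * diagonal (fun i => (f i : ℂ)) * Uᴴ).PosSemidef := by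
  have hD : (diagonal (fun i => (f i : ℂ))).PosSemidef :=
    posSemidef_diagonal_iff.mpr (fun i => by
      rw [Complex.zero_le_real]; exact hf i)
  exact hD.mul_mul_conjTranspose_same U

lemma conj_diag_entry_nonneg {d : ℕ} {U : Matrix (Fin d) (Fin d) ℂ}
    (hU1 : Uᴴ * U = 1) (v : Fin d → ℂ)
    (h : (U * diagonal v * Uᴴ).PosSemidef) : ∀ i, 0 ≤ v i := by
  have h2 := h.mul_mul_conjTranspose_same Uᴴ
  rw [conjTranspose_conjTranspose] at h2
  have h3 : Uᴴ * (U * diagonal v * Uᴴ) * U = diagonal v := by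
    calc Uᴴ * (U * diagonal v * Uᴴ) * U = (Uᴴ * U) * diagonal v * (Uᴴ * U) := by
          simp only [Matrix.mul_assoc]
      _ = diagonal v := by rw [hU1, Matrix.one_mul, Matrix.mul_one]
  rw [h3] at h2
  exact posSemidef_diagonal_iff.mp h2

open scoped MatrixOrder in
lemma conj_sqrt {d : ℕ} {U : Matrix (Fin d) (Fin d) ℂ}
    (hU1 : Uᴴ * U = 1) (f : Fin d → ℝ) (hf : ∀ i, 0 ≤ f i)
    {M : Matrix (Fin d) (Fin d) ℂ} (hM : M.PosSemidef)
    (hMe : M = U * diagonal (fun i => (f i : ℂ)) * Uᴴ) :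
    hM.sqrt = U * diagonal (fun i => (Real.sqrt (f i) : ℂ)) * Uᴴ := by
  have hS := conj_psd (U := U) (fun i => Real.sqrt (f i)) (fun i => Real.sqrt_nonneg _)
  have hsqM : hM.sqrt = CFC.sqrt M := by
    rw [CFC.sqrt_eq_real_sqrt M hM.nonneg, cfcₙ_eq_cfc, hM.1.cfc_eq]
    rfl
  rw [hsqM]
  refine CFC.sqrt_unique ?_ hS.nonneg
  rw [hMe]
  calc U * diagonal (fun i => (Real.sqrt (f i) : ℂ)) * Uᴴ *
        (U * diagonal (fun i => (Real.sqrt (f i) : ℂ)) * Uᴴ)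
      = U * diagonal (fun i => (Real.sqrt (f i) : ℂ)) * (Uᴴ * U) *
        diagonal (fun i => (Real.sqrt (f i) : ℂ)) * Uᴴ := by
        simp only [Matrix.mul_assoc]
    _ = U * (diagonal (fun i => (Real.sqrt (f i) : ℂ)) *
        diagonal (fun i => (Real.sqrt (f i) : ℂ))) * Uᴴ := by
        rw [hU1, Matrix.mul_one]
        simp only [Matrix.mul_assoc]
    _ = U * diagonal (fun i => (f i : ℂ)) * Uᴴ := by
        rw [diagonal_mul_diagonal]
        have he : (fun i => (Real.sqrt (f i) : ℂ) * (Real.sqrt (f i) : ℂ)) =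
            fun i => (f i : ℂ) := by
          funext i
          rw [← Complex.ofReal_mul, Real.mul_self_sqrt (hf i)]
        rw [he]

lemma conj_trace_re {d : ℕ} {U : Matrix (Fin d) (Fin d) ℂ}
    (hU1 : Uᴴ * U = 1) (f : Fin d → ℝ) :
    (U * diagonal (fun i => (f i : ℂ)) * Uᴴ).trace.re = ∑ i, f i := by
  rw [trace_mul_cycle, hU1, Matrix.one_mul, trace_diagonal]
  rw [Complex.re_sum]
  simp

lemma conj_sqrt_trace_re {d : ℕ} {U : Matrix (Fin d) (Fin d) ℂ}
    (hU1 : Uᴴ * U = 1) (f : Fin d → ℝ) (hf : ∀ i, 0 ≤ f i)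
    {M : Matrix (Fin d) (Fin d) ℂ} (hM : M.PosSemidef)
    (hMe : M = U * diagonal (fun i => (f i : ℂ)) * Uᴴ) :
    hM.sqrt.trace.re = ∑ i, Real.sqrt (f i) := by
  rw [conj_sqrt hU1 f hf hM hMe, conj_trace_re hU1]


lemma scalar_ineq {d : ℕ} (p q : Fin d → ℝ) (hp : ∀ i, 0 ≤ p i) (hq : ∀ i, 0 ≤ q i)
    (hps : ∑ i, p i = 1) (hqs : ∑ i, q i = 1) (l0 : ℝ) (hl0 : 1 < l0)
    (hdom : ∀ i, p i ≤ l0 * q i) :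
    ∑ i, Real.sqrt (p i * q i) ≥
      1 - (1 / 2) * (Real.sqrt l0 / (Real.sqrt l0 + 1)) * ∑ i, |p i - q i| := by
  set s := Real.sqrt l0 with hs
  have hs1 : 1 ≤ s := by
    rw [hs, show (1:ℝ) = Real.sqrt 1 by simp]
    exact Real.sqrt_le_sqrt hl0.le
  have hs0 : (0:ℝ) < s + 1 := by linarith
  have key : ∀ i, q i - max (q i - p i) 0 + max (p i - q i) 0 / (s + 1) ≤
      Real.sqrt (p i * q i) := by
    intro i
    rcases le_total (q i) (p i) with h | h
    · have h1 : max (q i - p i) 0 = 0 := max_eq_right (by linarith)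
      have h2 : max (p i - q i) 0 = p i - q i := max_eq_left (by linarith)
      rw [h1, h2, sub_zero]
      set a := Real.sqrt (p i) with ha'
      set b := Real.sqrt (q i) with hb'
      have ha : 0 ≤ a := Real.sqrt_nonneg _
      have hb : 0 ≤ b := Real.sqrt_nonneg _
      have hab : b ≤ a := Real.sqrt_le_sqrt h
      have has : a ≤ s * b := by
        rw [ha', hb', hs, ← Real.sqrt_mul (by linarith : (0:ℝ) ≤ l0)]
        exact Real.sqrt_le_sqrt (hdom i)
      have hpq : Real.sqrt (p i * q i) = a * b := Real.sqrt_mul (hp i) _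
      have hpa : p i = a * a := (Real.mul_self_sqrt (hp i)).symm
      have hqb : q i = b * b := (Real.mul_self_sqrt (hq i)).symm
      rw [hpq, hpa, hqb]
      have h4 : (a * a - b * b) / (s + 1) ≤ a * b - b * b := by
        rw [div_le_iff₀ hs0]
        nlinarith [mul_nonneg (sub_nonneg.mpr hab) (sub_nonneg.mpr has)]
      linarith
    · have h1 : max (q i - p i) 0 = q i - p i := max_eq_left (by linarith)
      have h2 : max (p i - q i) 0 = 0 := max_eq_right (by linarith)
      rw [h1, h2, zero_div, add_zero]
      have h3 : p i = Real.sqrt (p i * p i) := (Real.sqrt_mul_self (hp i)).symm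
      have h4 : Real.sqrt (p i * p i) ≤ Real.sqrt (p i * q i) :=
        Real.sqrt_le_sqrt (mul_le_mul_of_nonneg_left h (hp i))
      linarith
  have hsum : ∑ i, (q i - max (q i - p i) 0 + max (p i - q i) 0 / (s + 1)) ≤
      ∑ i, Real.sqrt (p i * q i) := Finset.sum_le_sum (fun i _ => key i)
  set T := ∑ i, max (p i - q i) 0 with hT
  have hT2 : ∑ i, max (q i - p i) 0 = T := by
    have he : ∀ i, max (q i - p i) 0 = max (p i - q i) 0 - (p i - q i) := by
      intro i
      rcases le_total (p i) (q i) with h | h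
      · rw [max_eq_left (by linarith), max_eq_right (by linarith)]; ring
      · rw [max_eq_right (by linarith), max_eq_left (by linarith)]; ring
    rw [Finset.sum_congr rfl (fun i _ => he i), Finset.sum_sub_distrib, Finset.sum_sub_distrib,
      hps, hqs, hT]
    ring
  have habs : ∑ i, |p i - q i| = 2 * T := by
    have he : ∀ i, |p i - q i| = max (p i - q i) 0 + max (q i - p i) 0 := by
      intro i
      rcases le_total (p i) (q i) with h | h
      · rw [max_eq_right (by linarith), max_eq_left (by linarith), abs_of_nonpos (by linarith)]
        ring
      · rw [max_eq_left (by linarith), max_eq_right (by linarith), abs_of_nonneg (by linarith)]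
        ring
    rw [Finset.sum_congr rfl (fun i _ => he i), Finset.sum_add_distrib, hT2, hT]
    ring
  have hsplit : ∑ i, (q i - max (q i - p i) 0 + max (p i - q i) 0 / (s + 1)) =
      1 - T + T / (s + 1) := by
    rw [Finset.sum_add_distrib, Finset.sum_sub_distrib, hqs, hT2, ← Finset.sum_div, ← hT]
  rw [ge_iff_le, habs]
  rw [hsplit] at hsum
  have hfinal : 1 - (1/2) * (s / (s + 1)) * (2 * T) = 1 - T + T / (s + 1) := by
    field_simp
    ring
  linarith


open Matrix in
open scoped ComplexOrder in
theorem quantum_fidelity_lower_bound_max_rel_commuting {d : ℕ}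
    (ρ σ : Matrix (Fin d) (Fin d) ℂ) (hρ : ρ.PosSemidef) (hσ : σ.PosSemidef)
    (hρ1 : ρ.trace = 1) (hσ1 : σ.trace = 1) (hcomm : ρ * σ = σ * ρ)
    (l0 : ℝ) (hl0 : 1 < l0) (hdom : ((l0 : ℂ) • σ - ρ).PosSemidef) :
    (Matrix.PosSemidef.sqrt
        (show (hρ.sqrt * σ * hρ.sqrt).PosSemidef by
          have h := hσ.mul_mul_conjTranspose_same hρ.sqrt
          rwa [hρ.posSemidef_sqrt.isHermitian.eq] at h)).trace.re ≥
      1 - (1 / 2) * (Real.sqrt l0 / (Real.sqrt l0 + 1)) *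
        (Matrix.PosSemidef.sqrt
          (show ((ρ - σ) * (ρ - σ)).PosSemidef by
            have h := Matrix.posSemidef_conjTranspose_mul_self (ρ - σ)
            rwa [Matrix.IsHermitian.eq (hρ.isHermitian.sub hσ.isHermitian)] at h)).trace.re := by
  obtain ⟨U, p, q, hU1, hU2, hρe, hσe⟩ := simul_diag ρ σ hρ.1 hσ.1 hcomm
  have hp : ∀ i, 0 ≤ p i := by
    intro i
    have h := conj_diag_entry_nonneg hU1 _ (hρe ▸ hρ) i
    rwa [Complex.zero_le_real] at h
  have hq : ∀ i, 0 ≤ q i := by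
    intro i
    have h := conj_diag_entry_nonneg hU1 _ (hσe ▸ hσ) i
    rwa [Complex.zero_le_real] at h
  have hlin : (l0 : ℂ) • σ - ρ = U * diagonal (fun i => ((l0 * q i - p i : ℝ) : ℂ)) * Uᴴ := by
    rw [hρe, hσe, ← smul_mul_assoc, ← mul_smul_comm, ← Matrix.sub_mul, ← Matrix.mul_sub]
    congr 1
    congr 1
    rw [← diagonal_smul, diagonal_sub, diagonal_eq_diagonal_iff]
    intro i
    simp only [Pi.smul_apply, smul_eq_mul]
    push_cast
    ring
  have hdom' : ∀ i, p i ≤ l0 * q i := by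
    intro i
    have h := conj_diag_entry_nonneg hU1 _ (hlin ▸ hdom) i
    rw [Complex.zero_le_real] at h
    linarith
  have hps : ∑ i, p i = 1 := by
    have h := congrArg Complex.re hρ1
    rw [hρe, conj_trace_re hU1] at h
    simpa using h
  have hqs : ∑ i, q i = 1 := by
    have h := congrArg Complex.re hσ1
    rw [hσe, conj_trace_re hU1] at h
    simpa using h
  have hconj_mul : ∀ (v w : Fin d → ℂ),
      (U * diagonal v * Uᴴ) * (U * diagonal w * Uᴴ) = U * diagonal (fun i => v i * w i) * Uᴴ := by
    intro v w
    calc (U * diagonal v * Uᴴ) * (U * diagonal w * Uᴴ)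
        = U * diagonal v * (Uᴴ * U) * diagonal w * Uᴴ := by simp only [Matrix.mul_assoc]
      _ = U * (diagonal v * diagonal w) * Uᴴ := by
          rw [hU1, Matrix.mul_one]
          simp only [Matrix.mul_assoc]
      _ = U * diagonal (fun i => v i * w i) * Uᴴ := by rw [diagonal_mul_diagonal]
  have hsq : hρ.sqrt = U * diagonal (fun i => ((Real.sqrt (p i) : ℝ) : ℂ)) * Uᴴ :=
    conj_sqrt hU1 p hp hρ hρe
  have hM1e : hρ.sqrt * σ * hρ.sqrt = U * diagonal (fun i => ((p i * q i : ℝ) : ℂ)) * Uᴴ := by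
    rw [hsq, hσe, hconj_mul, hconj_mul]
    congr 1
    congr 1
    rw [diagonal_eq_diagonal_iff]
    intro i
    have hr : Real.sqrt (p i) * q i * Real.sqrt (p i) = p i * q i := by
      linear_combination q i * Real.mul_self_sqrt (hp i)
    exact_mod_cast hr
  have hsub : (ρ - σ) * (ρ - σ) =
      U * diagonal (fun i => (((p i - q i) * (p i - q i) : ℝ) : ℂ)) * Uᴴ := by
    have h1 : ρ - σ = U * diagonal (fun i => ((p i - q i : ℝ) : ℂ)) * Uᴴ := by
      rw [hρe, hσe, ← Matrix.sub_mul, ← Matrix.mul_sub]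
      congr 1
      congr 1
      rw [diagonal_sub, diagonal_eq_diagonal_iff]
      intro i
      push_cast
      ring
    rw [h1, hconj_mul]
    congr 1
    congr 1
    rw [diagonal_eq_diagonal_iff]
    intro i
    push_cast
    ring
  rw [conj_sqrt_trace_re hU1 (fun i => p i * q i) (fun i => mul_nonneg (hp i) (hq i)) _ hM1e,
    conj_sqrt_trace_re hU1 (fun i => (p i - q i) * (p i - q i))
      (fun i => mul_self_nonneg _) _ hsub]
  have habs : ∀ i, Real.sqrt ((p i - q i) * (p i - q i)) = |p i - q i| := by
    intro i
    rw [← Real.sqrt_sq_eq_abs, sq]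
  rw [Finset.sum_congr rfl (fun i _ => habs i)]
  exact scalar_ineq p q hp hq hps hqs l0 hl0 hdom'
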